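/- arXiv:2505.07565 — 4 statements merged into one kernel-verified Lean document; each statement's English description precedes it below -/
import Mathlib

section
/- Let V be a countable type, μ : V → ℝ a weight with μ(x) > 0 for all x, and let m, C̃ > 0 and c ≥ 1 be real constants. Let P : ℝ → V → V → ℝ satisfy, for all t > 0 and all x, y ∈ V: (i) P(t, y, x) ≥ 0; (ii) P(t, y, x) ≤ C̃ · t^(−m/2); (iii) P(t, y, x) ≤ c · P(2t, y, x); (iv) the family x ↦ P(2t, y, x)·μ(x) is summable with ∑_{x∈V} P(2t, y, x) μ(x) ≤ 1. Then for every real r ≥ 1, every t > 0 and every y ∈ V, the family x ↦ P(t, y, x)^r μ(x) is summable and ∑_{x∈V} P(t, y, x)^r μ(x) ≤ c · C̃^(r−1) · t^(−(m/2)(r−1)); equivalently ‖P(t, y, ·)‖_{ℓ^r(V,μ)} ≤ (c · C̃^(r−1))^(1/r) · t^(−(m/2)(1−1/r)). -/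
/-- Theorem 2.1 (core): `ℓ^r` bounds for the heat kernel from the on-diagonal upper
bound, the Harnack (time-doubling) comparison and sub-stochasticity. -/
theorem heat_kernel_lp_bound {V : Type*} [Countable V] (μ : V → ℝ)
    (hμ : ∀ x, 0 < μ x) (m C c : ℝ) (hm : 0 < m) (hC : 0 < C) (hc : 1 ≤ c)
    (P : ℝ → V → V → ℝ)
    (hpos : ∀ t : ℝ, 0 < t → ∀ x y : V, 0 ≤ P t y x)
    (hub : ∀ t : ℝ, 0 < t → ∀ x y : V, P t y x ≤ C * t ^ (-(m / 2)))
    (hdoub : ∀ t : ℝ, 0 < t → ∀ x y : V, P t y x ≤ c * P (2 * t) y x)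
    (hsub : ∀ t : ℝ, 0 < t → ∀ y : V,
      Summable (fun x => P (2 * t) y x * μ x) ∧ (∑' x, P (2 * t) y x * μ x) ≤ 1) :
    ∀ r : ℝ, 1 ≤ r → ∀ t : ℝ, 0 < t → ∀ y : V,
      Summable (fun x => P t y x ^ r * μ x) ∧
      (∑' x, P t y x ^ r * μ x) ≤ c * C ^ (r - 1) * t ^ (-(m / 2) * (r - 1)) ∧
      (∑' x, P t y x ^ r * μ x) ^ (1 / r) ≤
        (c * C ^ (r - 1)) ^ (1 / r) * t ^ (-(m / 2) * (1 - 1 / r)) := by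
  intro r hr t ht y
  have hc0 : (0:ℝ) < c := lt_of_lt_of_le one_pos hc
  have hr0 : (0:ℝ) < r := lt_of_lt_of_le one_pos hr
  have hr1 : (0:ℝ) ≤ r - 1 := by linarith
  set K : ℝ := C * t ^ (-(m / 2)) with hK
  have hK0 : 0 < K := mul_pos hC (Real.rpow_pos_of_pos ht _)
  -- pointwise bound
  have key : ∀ x, P t y x ^ r * μ x ≤ K ^ (r - 1) * c * (P (2 * t) y x * μ x) := by
    intro x
    have hPx := hpos t ht x y
    have h1 : P t y x ^ r ≤ K ^ (r - 1) * (c * P (2 * t) y x) := by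
      rcases eq_or_lt_of_le hPx with h0 | h0
      · rw [← h0, Real.zero_rpow (ne_of_gt hr0)]
        have h2t : (0:ℝ) < 2 * t := by linarith
        exact mul_nonneg (Real.rpow_nonneg hK0.le _)
          (mul_nonneg hc0.le (hpos _ h2t x y))
      · have : P t y x ^ r = P t y x ^ (r - 1) * P t y x := by
          rw [← Real.rpow_add_one (ne_of_gt h0)]; ring_nf
        rw [this]
        have ha : P t y x ^ (r - 1) ≤ K ^ (r - 1) :=
          Real.rpow_le_rpow hPx (hub t ht x y) hr1
        have hb : P t y x ≤ c * P (2 * t) y x := hdoub t ht x y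
        exact mul_le_mul ha hb hPx (Real.rpow_nonneg hK0.le _)
    calc P t y x ^ r * μ x ≤ K ^ (r - 1) * (c * P (2 * t) y x) * μ x :=
          mul_le_mul_of_nonneg_right h1 (hμ x).le
      _ = K ^ (r - 1) * c * (P (2 * t) y x * μ x) := by ring
  obtain ⟨hsum2, htsum2⟩ := hsub t ht y
  have hnn : ∀ x, 0 ≤ P t y x ^ r * μ x := fun x =>
    mul_nonneg (Real.rpow_nonneg (hpos t ht x y) _) (hμ x).le
  have hsumBig : Summable (fun x => K ^ (r - 1) * c * (P (2 * t) y x * μ x)) :=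
    hsum2.mul_left _
  have hsum : Summable (fun x => P t y x ^ r * μ x) :=
    Summable.of_nonneg_of_le hnn key hsumBig
  -- the K in terms of C, t
  have hKpow : K ^ (r - 1) = C ^ (r - 1) * t ^ (-(m / 2) * (r - 1)) := by
    rw [hK, Real.mul_rpow hC.le (Real.rpow_nonneg ht.le _),
      ← Real.rpow_mul ht.le]
  have hts : (∑' x, P t y x ^ r * μ x) ≤ c * C ^ (r - 1) * t ^ (-(m / 2) * (r - 1)) := by
    calc (∑' x, P t y x ^ r * μ x)
        ≤ ∑' x, K ^ (r - 1) * c * (P (2 * t) y x * μ x) :=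
          Summable.tsum_le_tsum key hsum hsumBig
      _ = K ^ (r - 1) * c * (∑' x, P (2 * t) y x * μ x) := tsum_mul_left
      _ ≤ K ^ (r - 1) * c * 1 := by
          apply mul_le_mul_of_nonneg_left htsum2
          exact mul_nonneg (Real.rpow_nonneg hK0.le _) hc0.le
      _ = c * C ^ (r - 1) * t ^ (-(m / 2) * (r - 1)) := by rw [hKpow]; ring
  refine ⟨hsum, hts, ?_⟩
  have hS0 : 0 ≤ ∑' x, P t y x ^ r * μ x := tsum_nonneg hnn
  have h1r : (0:ℝ) ≤ 1 / r := by positivity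
  have step : (∑' x, P t y x ^ r * μ x) ^ (1 / r) ≤
      (c * C ^ (r - 1) * t ^ (-(m / 2) * (r - 1))) ^ (1 / r) :=
    Real.rpow_le_rpow hS0 hts h1r
  have hcC : (0:ℝ) ≤ c * C ^ (r - 1) :=
    mul_nonneg hc0.le (Real.rpow_nonneg hC.le _)
  calc (∑' x, P t y x ^ r * μ x) ^ (1 / r)
      ≤ (c * C ^ (r - 1) * t ^ (-(m / 2) * (r - 1))) ^ (1 / r) := step
    _ = (c * C ^ (r - 1)) ^ (1 / r) * (t ^ (-(m / 2) * (r - 1))) ^ (1 / r) :=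
        Real.mul_rpow hcC (Real.rpow_nonneg ht.le _)
    _ = (c * C ^ (r - 1)) ^ (1 / r) * t ^ (-(m / 2) * (1 - 1 / r)) := by
        rw [← Real.rpow_mul ht.le]
        congr 1
        field_simp
end

section
/- Let V be a countable type, μ : V → ℝ a weight with μ(x) > 0 for all x, and K : V → V → ℝ with K(x,y) ≥ 0 for all x, y. Let a, r ∈ [1, ∞) and b ∈ (1, ∞) be real numbers with 1 + 1/b = 1/a + 1/r, and let A ≥ 0. Assume: (i) for every x ∈ V, the family y ↦ K(x,y)^r μ(y) is summable with ∑_{y} K(x,y)^r μ(y) ≤ A^r; (ii) for every y ∈ V, the family x ↦ K(x,y)^r μ(x) is summable with ∑_{x} K(x,y)^r μ(x) ≤ A^r; (iii) g : V → ℝ satisfies ∑_{y} |g(y)|^a μ(y) < ∞. Then for every x the family y ↦ K(x,y)|g(y)|μ(y) is summable, and ∑_{x∈V} ( ∑_{y∈V} K(x,y) |g(y)| μ(y) )^b μ(x) ≤ A^b · ( ∑_{y∈V} |g(y)|^a μ(y) )^{b/a}; equivalently ‖∑_y K(·,y) g(y) μ(y)‖_{ℓ^b(V,μ)} ≤ A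 · ‖g‖_{ℓ^a(V,μ)}. -/
open scoped ENNReal

/-- Hölder's inequality for `tsum`s of `ℝ≥0∞`-valued functions. -/
private lemma tsum_inner_le_Lp_mul_Lq' {ι : Type*} (f g : ι → ℝ≥0∞) {p q : ℝ}
    (hpq : p.HolderConjugate q) :
    ∑' i, f i * g i ≤ (∑' i, f i ^ p) ^ (1 / p) * (∑' i, g i ^ q) ^ (1 / q) := by
  rw [ENNReal.tsum_eq_iSup_sum]
  refine iSup_le fun s => (ENNReal.inner_le_Lp_mul_Lq s f g hpq).trans ?_
  exact mul_le_mul'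
    (ENNReal.rpow_le_rpow (ENNReal.sum_le_tsum s) (one_div_pos.mpr hpq.left_pos).le)
    (ENNReal.rpow_le_rpow (ENNReal.sum_le_tsum s) (one_div_pos.mpr hpq.right_pos).le)

/-- Two-exponent Hölder: `∑ u^s v^t ≤ (∑ u)^s (∑ v)^t` when `s + t = 1`, `s, t ≥ 0`. -/
private lemma tsum_rpow_mul_rpow_le {ι : Type*} (u v : ι → ℝ≥0∞) {s t : ℝ}
    (hs : 0 ≤ s) (ht : 0 ≤ t) (hst : s + t = 1) :
    ∑' i, u i ^ s * v i ^ t ≤ (∑' i, u i) ^ s * (∑' i, v i) ^ t := by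
  rcases hs.eq_or_lt with h0 | hs'
  · have ht1 : t = 1 := by linarith
    simp [← h0, ht1]
  rcases ht.eq_or_lt with h1 | ht'
  · have hs1 : s = 1 := by linarith
    simp [← h1, hs1]
  · have hs1 : s < 1 := by linarith
    have hpq : (1 / s).HolderConjugate (1 / t) := by
      rw [Real.holderConjugate_iff]
      constructor
      · rw [lt_div_iff₀ hs']; linarith
      · rw [one_div, one_div, inv_inv, inv_inv]; exact hst
    have eu : ∀ i, (u i ^ s) ^ (1 / s) = u i := fun i => by
      rw [← ENNReal.rpow_mul, mul_one_div_cancel hs'.ne', ENNReal.rpow_one]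
    have ev : ∀ i, (v i ^ t) ^ (1 / t) = v i := fun i => by
      rw [← ENNReal.rpow_mul, mul_one_div_cancel ht'.ne', ENNReal.rpow_one]
    have h := tsum_inner_le_Lp_mul_Lq' (fun i => u i ^ s) (fun i => v i ^ t) hpq
    simpa only [eu, ev, one_div_one_div] using h

/-- Three-exponent Hölder for `tsum`s in `ℝ≥0∞`, allowing zero exponents. -/
private lemma tsum_rpow3_le {ι : Type*} (u v w : ι → ℝ≥0∞) {c s t : ℝ}
    (hc : 0 ≤ c) (hs : 0 ≤ s) (ht : 0 ≤ t) (h : c + s + t = 1) :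
    ∑' i, u i ^ c * (v i ^ s * w i ^ t) ≤
      (∑' i, u i) ^ c * ((∑' i, v i) ^ s * (∑' i, w i) ^ t) := by
  have hc1 : c ≤ 1 := by linarith
  rcases hc1.eq_or_lt with hc1 | hc1
  · have hs0 : s = 0 := by linarith
    have ht0 : t = 0 := by linarith
    simp [hs0, ht0, hc1]
  · set d : ℝ := 1 - c with hd
    have hd0 : 0 < d := by linarith
    have hsd : 0 ≤ s / d := div_nonneg hs hd0.le
    have htd : 0 ≤ t / d := div_nonneg ht hd0.le
    have hsum : s / d + t / d = 1 := by
      rw [← add_div, show s + t = d by rw [hd]; linarith, div_self hd0.ne']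
    have point : ∀ i, v i ^ s * w i ^ t = (v i ^ (s / d) * w i ^ (t / d)) ^ d := fun i => by
      rw [ENNReal.mul_rpow_of_nonneg _ _ hd0.le, ← ENNReal.rpow_mul, ← ENNReal.rpow_mul,
        div_mul_cancel₀ _ hd0.ne', div_mul_cancel₀ _ hd0.ne']
    calc ∑' i, u i ^ c * (v i ^ s * w i ^ t)
        = ∑' i, u i ^ c * (v i ^ (s / d) * w i ^ (t / d)) ^ d := by
          exact tsum_congr fun i => by rw [point i]
      _ ≤ (∑' i, u i) ^ c * (∑' i, v i ^ (s / d) * w i ^ (t / d)) ^ d :=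
          tsum_rpow_mul_rpow_le u (fun i => v i ^ (s / d) * w i ^ (t / d)) hc hd0.le
            (by rw [hd]; ring)
      _ ≤ (∑' i, u i) ^ c * (((∑' i, v i) ^ (s / d)) * ((∑' i, w i) ^ (t / d))) ^ d := by
          refine mul_le_mul_right (ENNReal.rpow_le_rpow ?_ hd0.le) _
          exact tsum_rpow_mul_rpow_le v w hsd htd hsum
      _ = (∑' i, u i) ^ c * ((∑' i, v i) ^ s * (∑' i, w i) ^ t) := by
          rw [ENNReal.mul_rpow_of_nonneg _ _ hd0.le, ← ENNReal.rpow_mul, ← ENNReal.rpow_mul,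
            div_mul_cancel₀ _ hd0.ne', div_mul_cancel₀ _ hd0.ne']

/-- Pointwise factorization used in the Young inequality proof. -/
private lemma point_id (x y z : ℝ≥0∞) {r a c s t : ℝ} (hr : 0 ≤ r) (ha : 0 ≤ a)
    (hc : 0 ≤ c) (hs : 0 ≤ s) (ht : 0 ≤ t)
    (h1 : r * (c + s) = 1) (h2 : a * (c + t) = 1) (h3 : c + s + t = 1) :
    (x ^ r * y ^ a * z) ^ c * ((x ^ r * z) ^ s * (y ^ a * z) ^ t) = x * y * z := by
  rw [ENNReal.mul_rpow_of_nonneg _ _ hc, ENNReal.mul_rpow_of_nonneg _ _ hc,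
    ENNReal.mul_rpow_of_nonneg _ _ hs, ENNReal.mul_rpow_of_nonneg _ _ ht,
    ← ENNReal.rpow_mul x, ← ENNReal.rpow_mul y, ← ENNReal.rpow_mul x, ← ENNReal.rpow_mul y]
  have ex : x ^ (r * c) * x ^ (r * s) = x := by
    rw [← ENNReal.rpow_add_of_nonneg _ _ (mul_nonneg hr hc) (mul_nonneg hr hs),
      show r * c + r * s = 1 by nlinarith, ENNReal.rpow_one]
  have ey : y ^ (a * c) * y ^ (a * t) = y := by
    rw [← ENNReal.rpow_add_of_nonneg _ _ (mul_nonneg ha hc) (mul_nonneg ha ht),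
      show a * c + a * t = 1 by nlinarith, ENNReal.rpow_one]
  have ez : z ^ c * (z ^ s * z ^ t) = z := by
    rw [← ENNReal.rpow_add_of_nonneg _ _ hs ht,
      ← ENNReal.rpow_add_of_nonneg _ _ hc (by linarith : (0:ℝ) ≤ s + t),
      show c + (s + t) = 1 by linarith, ENNReal.rpow_one]
  calc x ^ (r * c) * y ^ (a * c) * z ^ c * (x ^ (r * s) * z ^ s * (y ^ (a * t) * z ^ t))
      = (x ^ (r * c) * x ^ (r * s)) * ((y ^ (a * c) * y ^ (a * t)) * (z ^ c * (z ^ s * z ^ t))) :=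
        by ring
    _ = x * (y * z) := by rw [ex, ey, ez]
    _ = x * y * z := by ring

/-- Theorem 2.2 (case 1 < b < ∞): discrete weighted Young-type convolution inequality
for a nonnegative kernel with two-sided `ℓ^r` bounds. -/
theorem kernel_young_inequality {V : Type*} [Countable V] (μ : V → ℝ)
    (hμ : ∀ x, 0 < μ x) (K : V → V → ℝ) (hK : ∀ x y, 0 ≤ K x y)
    (a r b A : ℝ) (ha : 1 ≤ a) (hr : 1 ≤ r) (hb : 1 < b)
    (hrel : 1 + 1 / b = 1 / a + 1 / r) (hA : 0 ≤ A)
    (hKx : ∀ x, Summable (fun y => K x y ^ r * μ y) ∧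
      (∑' y, K x y ^ r * μ y) ≤ A ^ r)
    (hKy : ∀ y, Summable (fun x => K x y ^ r * μ x) ∧
      (∑' x, K x y ^ r * μ x) ≤ A ^ r)
    (g : V → ℝ) (hg : Summable (fun y => |g y| ^ a * μ y)) :
    (∀ x, Summable (fun y => K x y * |g y| * μ y)) ∧
    (∑' x, (∑' y, K x y * |g y| * μ y) ^ b * μ x) ≤
      A ^ b * (∑' y, |g y| ^ a * μ y) ^ (b / a) := by
  have ha0 : 0 < a := zero_lt_one.trans_le ha
  have hr0 : 0 < r := zero_lt_one.trans_le hr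
  have hb0 : 0 < b := zero_lt_one.trans hb
  set m : V → ℝ≥0∞ := fun x => ENNReal.ofReal (μ x) with hm_def
  set k : V → V → ℝ≥0∞ := fun x y => ENNReal.ofReal (K x y) with hk_def
  set G : V → ℝ≥0∞ := fun y => ENNReal.ofReal |g y| with hG_def
  set AE : ℝ≥0∞ := ENNReal.ofReal A with hAE_def
  set ga : ℝ := ∑' y, |g y| ^ a * μ y with hga_def
  have hga0 : 0 ≤ ga :=
    tsum_nonneg fun y => mul_nonneg (Real.rpow_nonneg (abs_nonneg _) _) (hμ y).le
  set Ga : ℝ≥0∞ := ENNReal.ofReal ga with hGa_def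
  -- exponents
  set c : ℝ := 1 / b with hc_def
  set ip : ℝ := 1 / r - 1 / b with hip_def
  set iq : ℝ := 1 / a - 1 / b with hiq_def
  have hc0 : 0 ≤ c := by positivity
  have h1a : 1 / a ≤ 1 := by rw [div_le_one ha0]; exact ha
  have h1r : 1 / r ≤ 1 := by rw [div_le_one hr0]; exact hr
  have hip0 : 0 ≤ ip := by
    have : ip = 1 - 1 / a := by rw [hip_def]; linarith
    rw [this]; linarith
  have hiq0 : 0 ≤ iq := by
    have : iq = 1 - 1 / r := by rw [hiq_def]; linarith
    rw [this]; linarith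
  have h3 : c + ip + iq = 1 := by
    rw [hc_def, hip_def, hiq_def]; linarith
  have h1 : r * (c + ip) = 1 := by
    rw [hc_def, hip_def, show 1 / b + (1 / r - 1 / b) = 1 / r by ring,
      mul_one_div, div_self hr0.ne']
  have h2 : a * (c + iq) = 1 := by
    rw [hc_def, hiq_def, show 1 / b + (1 / a - 1 / b) = 1 / a by ring,
      mul_one_div, div_self ha0.ne']
  -- pointwise conversions
  have hterm : ∀ x y, k x y * G y * m y = ENNReal.ofReal (K x y * |g y| * μ y) := fun x y => by
    rw [ENNReal.ofReal_mul (mul_nonneg (hK x y) (abs_nonneg _)), ENNReal.ofReal_mul (hK x y)]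
  have hkr : ∀ x y, k x y ^ r * m y = ENNReal.ofReal (K x y ^ r * μ y) := fun x y => by
    rw [ENNReal.ofReal_mul (Real.rpow_nonneg (hK x y) _),
      ENNReal.ofReal_rpow_of_nonneg (hK x y) hr0.le]
  have hkr' : ∀ x y, k x y ^ r * m x = ENNReal.ofReal (K x y ^ r * μ x) := fun x y => by
    rw [ENNReal.ofReal_mul (Real.rpow_nonneg (hK x y) _),
      ENNReal.ofReal_rpow_of_nonneg (hK x y) hr0.le]
  have hga' : ∀ y, G y ^ a * m y = ENNReal.ofReal (|g y| ^ a * μ y) := fun y => by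
    rw [ENNReal.ofReal_mul (Real.rpow_nonneg (abs_nonneg _) _),
      ENNReal.ofReal_rpow_of_nonneg (abs_nonneg _) ha0.le]
  -- kernel bounds in ℝ≥0∞
  have hKxE : ∀ x, ∑' y, k x y ^ r * m y ≤ AE ^ r := fun x => by
    calc ∑' y, k x y ^ r * m y = ∑' y, ENNReal.ofReal (K x y ^ r * μ y) :=
          tsum_congr fun y => hkr x y
      _ = ENNReal.ofReal (∑' y, K x y ^ r * μ y) :=
          (ENNReal.ofReal_tsum_of_nonneg
            (fun y => mul_nonneg (Real.rpow_nonneg (hK x y) _) (hμ y).le) (hKx x).1).symm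
      _ ≤ ENNReal.ofReal (A ^ r) := ENNReal.ofReal_le_ofReal (hKx x).2
      _ = AE ^ r := (ENNReal.ofReal_rpow_of_nonneg hA hr0.le).symm
  have hKyE : ∀ y, ∑' x, k x y ^ r * m x ≤ AE ^ r := fun y => by
    calc ∑' x, k x y ^ r * m x = ∑' x, ENNReal.ofReal (K x y ^ r * μ x) :=
          tsum_congr fun x => hkr' x y
      _ = ENNReal.ofReal (∑' x, K x y ^ r * μ x) :=
          (ENNReal.ofReal_tsum_of_nonneg
            (fun x => mul_nonneg (Real.rpow_nonneg (hK x y) _) (hμ x).le) (hKy y).1).symm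
      _ ≤ ENNReal.ofReal (A ^ r) := ENNReal.ofReal_le_ofReal (hKy y).2
      _ = AE ^ r := (ENNReal.ofReal_rpow_of_nonneg hA hr0.le).symm
  have hGaSum : ∑' y, G y ^ a * m y = Ga := by
    rw [hGa_def, hga_def, ENNReal.ofReal_tsum_of_nonneg
      (fun y => mul_nonneg (Real.rpow_nonneg (abs_nonneg _) _) (hμ y).le) hg]
    exact tsum_congr fun y => hga' y
  -- Step A: per-x Hölder bound
  have stepA : ∀ x, (∑' y, k x y * G y * m y) ≤
      (∑' y, k x y ^ r * G y ^ a * m y) ^ c * ((AE ^ r) ^ ip * Ga ^ iq) := by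
    intro x
    calc ∑' y, k x y * G y * m y
        = ∑' y, (k x y ^ r * G y ^ a * m y) ^ c *
            ((k x y ^ r * m y) ^ ip * (G y ^ a * m y) ^ iq) :=
          tsum_congr fun y =>
            (point_id (k x y) (G y) (m y) hr0.le ha0.le hc0 hip0 hiq0 h1 h2 h3).symm
      _ ≤ (∑' y, k x y ^ r * G y ^ a * m y) ^ c *
            ((∑' y, k x y ^ r * m y) ^ ip * (∑' y, G y ^ a * m y) ^ iq) :=
          tsum_rpow3_le _ _ _ hc0 hip0 hiq0 h3
      _ ≤ (∑' y, k x y ^ r * G y ^ a * m y) ^ c * ((AE ^ r) ^ ip * Ga ^ iq) := by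
          refine mul_le_mul_right (mul_le_mul' (ENNReal.rpow_le_rpow (hKxE x) hip0) ?_) _
          rw [hGaSum]
  -- Step B: raise to the power b
  have stepB : ∀ x, (∑' y, k x y * G y * m y) ^ b ≤
      (∑' y, k x y ^ r * G y ^ a * m y) * ((AE ^ r) ^ (ip * b) * Ga ^ (iq * b)) := by
    intro x
    calc (∑' y, k x y * G y * m y) ^ b
        ≤ ((∑' y, k x y ^ r * G y ^ a * m y) ^ c * ((AE ^ r) ^ ip * Ga ^ iq)) ^ b :=
          ENNReal.rpow_le_rpow (stepA x) hb0.le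
      _ = (∑' y, k x y ^ r * G y ^ a * m y) * ((AE ^ r) ^ (ip * b) * Ga ^ (iq * b)) := by
          rw [ENNReal.mul_rpow_of_nonneg _ _ hb0.le, ENNReal.mul_rpow_of_nonneg _ _ hb0.le,
            ← ENNReal.rpow_mul _ c b, ← ENNReal.rpow_mul _ ip b, ← ENNReal.rpow_mul _ iq b,
            show c * b = 1 by rw [hc_def]; field_simp, ENNReal.rpow_one]
  -- summing the T-term
  have sumT : ∑' x, (∑' y, k x y ^ r * G y ^ a * m y) * m x ≤ AE ^ r * Ga := by
    calc ∑' x, (∑' y, k x y ^ r * G y ^ a * m y) * m x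
        = ∑' x, ∑' y, (k x y ^ r * G y ^ a * m y) * m x :=
          tsum_congr fun x => ENNReal.tsum_mul_right.symm
      _ = ∑' y, ∑' x, (k x y ^ r * G y ^ a * m y) * m x := ENNReal.tsum_comm
      _ = ∑' y, (G y ^ a * m y) * ∑' x, k x y ^ r * m x := by
          refine tsum_congr fun y => ?_
          rw [← ENNReal.tsum_mul_left]
          exact tsum_congr fun x => by ring
      _ ≤ ∑' y, (G y ^ a * m y) * (AE ^ r) :=
          ENNReal.tsum_le_tsum fun y => mul_le_mul_right (hKyE y) _
      _ = AE ^ r * Ga := by rw [ENNReal.tsum_mul_right, hGaSum, mul_comm]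
  -- main ℝ≥0∞ inequality
  have main : (∑' x, (∑' y, k x y * G y * m y) ^ b * m x) ≤ AE ^ b * Ga ^ (b / a) := by
    have hipb : r * (ip * b + 1) = b := by
      rw [hip_def]; field_simp; ring
    have hiqb : iq * b + 1 = b / a := by
      rw [hiq_def]; field_simp; ring
    calc ∑' x, (∑' y, k x y * G y * m y) ^ b * m x
        ≤ ∑' x, ((∑' y, k x y ^ r * G y ^ a * m y) *
            ((AE ^ r) ^ (ip * b) * Ga ^ (iq * b))) * m x :=
          ENNReal.tsum_le_tsum fun x => mul_le_mul_left (stepB x) _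
      _ = ((AE ^ r) ^ (ip * b) * Ga ^ (iq * b)) *
            ∑' x, (∑' y, k x y ^ r * G y ^ a * m y) * m x := by
          rw [← ENNReal.tsum_mul_left]
          exact tsum_congr fun x => by ring
      _ ≤ ((AE ^ r) ^ (ip * b) * Ga ^ (iq * b)) * (AE ^ r * Ga) :=
          mul_le_mul_right sumT _
      _ = ((AE ^ r) ^ (ip * b) * (AE ^ r) ^ (1 : ℝ)) * (Ga ^ (iq * b) * Ga ^ (1 : ℝ)) := by
          rw [ENNReal.rpow_one, ENNReal.rpow_one]; ring
      _ = AE ^ b * Ga ^ (b / a) := by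
          rw [← ENNReal.rpow_add_of_nonneg _ _ (mul_nonneg hip0 hb0.le) zero_le_one,
            ← ENNReal.rpow_add_of_nonneg _ _ (mul_nonneg hiq0 hb0.le) zero_le_one,
            ← ENNReal.rpow_mul, hipb, hiqb]
  -- finiteness
  have hRne : AE ^ b * Ga ^ (b / a) ≠ ⊤ :=
    ENNReal.mul_ne_top (ENNReal.rpow_ne_top_of_nonneg hb0.le ENNReal.ofReal_ne_top)
      (ENNReal.rpow_ne_top_of_nonneg (by positivity) ENNReal.ofReal_ne_top)
  have hEne : (∑' x, (∑' y, k x y * G y * m y) ^ b * m x) ≠ ⊤ := ne_top_of_le_ne_top hRne main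
  have hm0 : ∀ x, m x ≠ 0 := fun x => (ENNReal.ofReal_pos.mpr (hμ x)).ne'
  have hmt : ∀ x, m x ≠ ⊤ := fun x => ENNReal.ofReal_ne_top
  have hSx : ∀ x, (∑' y, k x y * G y * m y) ≠ ⊤ := by
    intro x
    have h1' : (∑' y, k x y * G y * m y) ^ b * m x ≠ ⊤ :=
      ne_top_of_le_ne_top hEne (ENNReal.le_tsum x)
    have h2' : (∑' y, k x y * G y * m y) ^ b ≠ ⊤ := by
      intro h
      exact h1' (by rw [h, ENNReal.top_mul (hm0 x)])
    intro h
    exact h2' (by rw [h, ENNReal.top_rpow_of_pos hb0])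
  -- summability claim
  have hsummable : ∀ x, Summable (fun y => K x y * |g y| * μ y) := by
    intro x
    refine (ENNReal.summable_toReal (hSx x)).congr fun y => ?_
    rw [hterm x y, ENNReal.toReal_ofReal
      (mul_nonneg (mul_nonneg (hK x y) (abs_nonneg _)) (hμ y).le)]
  refine ⟨hsummable, ?_⟩
  -- transfer inner sums
  have hst : ∀ x, ∑' y, K x y * |g y| * μ y = (∑' y, k x y * G y * m y).toReal := by
    intro x
    rw [ENNReal.tsum_toReal_eq fun y => by rw [hterm x y]; exact ENNReal.ofReal_ne_top]
    exact tsum_congr fun y => by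
      rw [hterm x y, ENNReal.toReal_ofReal
        (mul_nonneg (mul_nonneg (hK x y) (abs_nonneg _)) (hμ y).le)]
  -- transfer outer sum
  have houter : ∑' x, (∑' y, K x y * |g y| * μ y) ^ b * μ x =
      (∑' x, (∑' y, k x y * G y * m y) ^ b * m x).toReal := by
    rw [ENNReal.tsum_toReal_eq fun x => ENNReal.mul_ne_top
      (ENNReal.rpow_ne_top_of_nonneg hb0.le (hSx x)) (hmt x)]
    refine tsum_congr fun x => ?_
    rw [hst x, ENNReal.toReal_mul, ENNReal.toReal_rpow, ENNReal.toReal_ofReal (hμ x).le]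
  rw [houter]
  have hfinal := ENNReal.toReal_mono hRne main
  rw [ENNReal.toReal_mul, ← ENNReal.toReal_rpow, ← ENNReal.toReal_rpow,
    ENNReal.toReal_ofReal hA, ENNReal.toReal_ofReal hga0] at hfinal
  exact hfinal
end

section
/- Let V be a countable type, μ : V → ℝ a weight with μ(x) > 0 for all x, and P : ℝ → V → V → ℝ such that for all t > 0 and all x, y ∈ V: P(t,x,y) ≥ 0, the family y ↦ P(t,x,y)μ(y) is summable, and ∑_{y∈V} P(t,x,y) μ(y) ≤ 1. Let T > 0, q ≥ 1 real, and g : ℝ → ℝ nondecreasing and globally Lipschitz. Let u₁, u₂, v₁, v₂ : [0,T] × V → ℝ be uniformly bounded, with u₁(t,x) ≥ 0 and u₂(t,x) ≥ 0 for all (t,x), each continuous as a map from [0,T] into ℓ^∞(V) (i.e., t ↦ sup_{x} |w(t,x) − w(t₀,x)| → 0 as t → t₀ for w ∈ {u₁,u₂,v₁,v₂}). Assume that for all t ∈ (0,T] and x ∈ V (all displayed sums and time integrals being convergent): u₁(t,x) ≤ ∑_y P(t,x,y) u₁(0,y) μ(y) + ∫₀ᵗ ∑_y P(t−s,x,y)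 g(v₁(s,y)) μ(y) ds; v₁(t,x) ≤ ∑_y P(t,x,y) v₁(0,y) μ(y) + ∫₀ᵗ ∑_y P(t−s,x,y) u₁(s,y)^q μ(y) ds; u₂(t,x) ≥ ∑_y P(t,x,y) u₂(0,y) μ(y) + ∫₀ᵗ ∑_y P(t−s,x,y) g(v₂(s,y)) μ(y) ds; v₂(t,x) ≥ ∑_y P(t,x,y) v₂(0,y) μ(y) + ∫₀ᵗ ∑_y P(t−s,x,y) u₂(s,y)^q μ(y) ds; and assume u₁(0,x) ≤ u₂(0,x) and v₁(0,x) ≤ v₂(0,x) for all x ∈ V. Then u₁(t,x) ≤ u₂(t,x) and v₁(t,x) ≤ v₂(t,x) for all t ∈ [0,T] and x ∈ V. -/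
open MeasureTheory

/-- Lemma 3.10: comparison principle for the integral formulation of the weakly
coupled parabolic system driven by a nonnegative sub-stochastic kernel `P`. -/
theorem comparison_principle {V : Type*} [Countable V] (μ : V → ℝ)
    (hμ : ∀ x, 0 < μ x) (P : ℝ → V → V → ℝ)
    (hP0 : ∀ t : ℝ, 0 < t → ∀ x y : V, 0 ≤ P t x y)
    (hPsum : ∀ t : ℝ, 0 < t → ∀ x : V, Summable (fun y => P t x y * μ y))
    (hPsub : ∀ t : ℝ, 0 < t → ∀ x : V, (∑' y, P t x y * μ y) ≤ 1)
    (T : ℝ) (hT : 0 < T) (q : ℝ) (hq : 1 ≤ q)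
    (g : ℝ → ℝ) (hgmono : Monotone g) (L : NNReal) (hgLip : LipschitzWith L g)
    (u₁ u₂ v₁ v₂ : ℝ → V → ℝ) (M : ℝ)
    (hbd : ∀ w ∈ ([u₁, u₂, v₁, v₂] : List (ℝ → V → ℝ)),
      ∀ t ∈ Set.Icc (0 : ℝ) T, ∀ x, |w t x| ≤ M)
    (hu₁nn : ∀ t ∈ Set.Icc (0 : ℝ) T, ∀ x, 0 ≤ u₁ t x)
    (hu₂nn : ∀ t ∈ Set.Icc (0 : ℝ) T, ∀ x, 0 ≤ u₂ t x)
    (hcont : ∀ w ∈ ([u₁, u₂, v₁, v₂] : List (ℝ → V → ℝ)),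
      ∀ t₀ ∈ Set.Icc (0 : ℝ) T, ∀ ε : ℝ, 0 < ε → ∃ δ : ℝ, 0 < δ ∧
        ∀ t ∈ Set.Icc (0 : ℝ) T, |t - t₀| < δ → ∀ x, |w t x - w t₀ x| ≤ ε)
    -- convergence of the displayed initial-data sums
    (hsum0 : ∀ t ∈ Set.Ioc (0 : ℝ) T, ∀ x : V,
      Summable (fun y => P t x y * u₁ 0 y * μ y) ∧
      Summable (fun y => P t x y * u₂ 0 y * μ y) ∧
      Summable (fun y => P t x y * v₁ 0 y * μ y) ∧
      Summable (fun y => P t x y * v₂ 0 y * μ y))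
    -- convergence of the displayed Duhamel sums
    (hsum1 : ∀ t ∈ Set.Ioc (0 : ℝ) T, ∀ x : V, ∀ s ∈ Set.Ico (0 : ℝ) t,
      Summable (fun y => P (t - s) x y * g (v₁ s y) * μ y) ∧
      Summable (fun y => P (t - s) x y * g (v₂ s y) * μ y) ∧
      Summable (fun y => P (t - s) x y * u₁ s y ^ q * μ y) ∧
      Summable (fun y => P (t - s) x y * u₂ s y ^ q * μ y))
    -- convergence of the displayed time integrals
    (hint : ∀ t ∈ Set.Ioc (0 : ℝ) T, ∀ x : V,
      IntervalIntegrable (fun s => ∑' y, P (t - s) x y * g (v₁ s y) * μ y) volume 0 t ∧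
      IntervalIntegrable (fun s => ∑' y, P (t - s) x y * g (v₂ s y) * μ y) volume 0 t ∧
      IntervalIntegrable (fun s => ∑' y, P (t - s) x y * u₁ s y ^ q * μ y) volume 0 t ∧
      IntervalIntegrable (fun s => ∑' y, P (t - s) x y * u₂ s y ^ q * μ y) volume 0 t)
    (hu₁ : ∀ t ∈ Set.Ioc (0 : ℝ) T, ∀ x : V,
      u₁ t x ≤ (∑' y, P t x y * u₁ 0 y * μ y) +
        ∫ s in (0 : ℝ)..t, ∑' y, P (t - s) x y * g (v₁ s y) * μ y)
    (hv₁ : ∀ t ∈ Set.Ioc (0 : ℝ) T, ∀ x : V,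
      v₁ t x ≤ (∑' y, P t x y * v₁ 0 y * μ y) +
        ∫ s in (0 : ℝ)..t, ∑' y, P (t - s) x y * u₁ s y ^ q * μ y)
    (hu₂ : ∀ t ∈ Set.Ioc (0 : ℝ) T, ∀ x : V,
      (∑' y, P t x y * u₂ 0 y * μ y) +
        (∫ s in (0 : ℝ)..t, ∑' y, P (t - s) x y * g (v₂ s y) * μ y) ≤ u₂ t x)
    (hv₂ : ∀ t ∈ Set.Ioc (0 : ℝ) T, ∀ x : V,
      (∑' y, P t x y * v₂ 0 y * μ y) +
        (∫ s in (0 : ℝ)..t, ∑' y, P (t - s) x y * u₂ s y ^ q * μ y) ≤ v₂ t x)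
    (hinitu : ∀ x, u₁ 0 x ≤ u₂ 0 x) (hinitv : ∀ x, v₁ 0 x ≤ v₂ 0 x) :
    ∀ t ∈ Set.Icc (0 : ℝ) T, ∀ x : V, u₁ t x ≤ u₂ t x ∧ v₁ t x ≤ v₂ t x := by
  classical
  rcases isEmpty_or_nonempty V with hV | hV
  · exact fun t ht x => (IsEmpty.false x).elim
  have x₀ : V := Classical.arbitrary V
  have hM : (0:ℝ) ≤ M :=
    (abs_nonneg _).trans (hbd u₁ (by simp) 0 ⟨le_refl 0, hT.le⟩ x₀)
  set K : ℝ := q * M ^ (q - 1) with hKdef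
  have hK : (0:ℝ) ≤ K := mul_nonneg (by linarith) (Real.rpow_nonneg hM _)
  set C : ℝ := ↑L + K with hCdef
  have hCnn : (0:ℝ) ≤ C := add_nonneg L.2 hK
  have hLC : (L:ℝ) ≤ C := le_add_of_nonneg_right hK
  have hKC : K ≤ C := le_add_of_nonneg_left L.2
  -- power comparison lemma
  have hpow : ∀ a b : ℝ, 0 ≤ a → a ≤ M → 0 ≤ b → b ≤ M →
      a ^ q - b ^ q ≤ K * max (a - b) 0 := by
    intro a b ha haM hb hbM
    rcases le_or_gt a b with h | h
    · exact le_trans (sub_nonpos.2 (Real.rpow_le_rpow ha h (by linarith)))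
        (mul_nonneg hK (le_max_right _ _))
    · have hlip : |a ^ q - b ^ q| ≤ K * |a - b| := by
        have hmain := Convex.norm_image_sub_le_of_norm_hasDerivWithin_le
          (f := fun z : ℝ => z ^ q) (f' := fun z : ℝ => q * z ^ (q - 1))
          (s := Set.Icc (0:ℝ) M)
          (fun z hz => (Real.hasDerivAt_rpow_const (Or.inr hq)).hasDerivWithinAt)
          (fun z hz => by
            rw [Real.norm_eq_abs,
              abs_of_nonneg (mul_nonneg (by linarith) (Real.rpow_nonneg hz.1 _))]
            exact mul_le_mul_of_nonneg_left
              (Real.rpow_le_rpow hz.1 hz.2 (by linarith)) (by linarith))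
          (convex_Icc 0 M) ⟨hb, hbM⟩ ⟨ha, haM⟩
        simpa [Real.norm_eq_abs] using hmain
      calc a ^ q - b ^ q ≤ |a ^ q - b ^ q| := le_abs_self _
        _ ≤ K * |a - b| := hlip
        _ = K * max (a - b) 0 := by
            rw [abs_of_pos (sub_pos.2 h), max_eq_left (sub_pos.2 h).le]
  -- the comparison gauge
  set ψ : ℝ → V → ℝ := fun t x =>
    max (max (u₁ t x - u₂ t x) 0) (max (v₁ t x - v₂ t x) 0) with hψdef
  have hψnn : ∀ t x, 0 ≤ ψ t x :=
    fun t x => le_trans (le_max_right _ _) (le_max_left _ _)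
  have hψbd : ∀ t ∈ Set.Icc (0:ℝ) T, ∀ x, ψ t x ≤ 2 * M := by
    intro t ht x
    have h1 := hbd u₁ (by simp) t ht x
    have h2 := hbd u₂ (by simp) t ht x
    have h3 := hbd v₁ (by simp) t ht x
    have h4 := hbd v₂ (by simp) t ht x
    have h1' := abs_le.1 h1; have h2' := abs_le.1 h2
    have h3' := abs_le.1 h3; have h4' := abs_le.1 h4
    simp only [hψdef, max_le_iff]
    refine ⟨⟨by linarith [h1'.2, h2'.1], by linarith⟩, by linarith [h3'.2, h4'.1], by linarith⟩
  set φ : ℝ → ℝ := fun t => ⨆ x, ψ t x with hφdef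
  have hbdd : ∀ t ∈ Set.Icc (0:ℝ) T, BddAbove (Set.range (ψ t)) := by
    intro t ht
    exact ⟨2 * M, by rintro r ⟨x, rfl⟩; exact hψbd t ht x⟩
  have hψle : ∀ t ∈ Set.Icc (0:ℝ) T, ∀ x, ψ t x ≤ φ t :=
    fun t ht x => le_ciSup (hbdd t ht) x
  have hφnn : ∀ t ∈ Set.Icc (0:ℝ) T, 0 ≤ φ t :=
    fun t ht => (hψnn t x₀).trans (hψle t ht x₀)
  have hφle : ∀ t ∈ Set.Icc (0:ℝ) T, φ t ≤ 2 * M :=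
    fun t ht => ciSup_le (hψbd t ht)
  -- continuity of φ
  have hφcont : ContinuousOn φ (Set.Icc 0 T) := by
    rw [Metric.continuousOn_iff]
    intro t₀ ht₀ ε hε
    have hε8 : 0 < ε / 8 := by linarith
    obtain ⟨δ₁, hδ₁, h₁⟩ := hcont u₁ (by simp) t₀ ht₀ (ε/8) hε8
    obtain ⟨δ₂, hδ₂, h₂⟩ := hcont u₂ (by simp) t₀ ht₀ (ε/8) hε8
    obtain ⟨δ₃, hδ₃, h₃⟩ := hcont v₁ (by simp) t₀ ht₀ (ε/8) hε8
    obtain ⟨δ₄, hδ₄, h₄⟩ := hcont v₂ (by simp) t₀ ht₀ (ε/8) hε8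
    refine ⟨min (min δ₁ δ₂) (min δ₃ δ₄), by positivity, ?_⟩
    intro t ht hdist
    rw [Real.dist_eq] at hdist
    have hd₁ := h₁ t ht (lt_of_lt_of_le hdist (le_trans (min_le_left _ _) (min_le_left _ _)))
    have hd₂ := h₂ t ht (lt_of_lt_of_le hdist (le_trans (min_le_left _ _) (min_le_right _ _)))
    have hd₃ := h₃ t ht (lt_of_lt_of_le hdist (le_trans (min_le_right _ _) (min_le_left _ _)))
    have hd₄ := h₄ t ht (lt_of_lt_of_le hdist (le_trans (min_le_right _ _) (min_le_right _ _)))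
    have hkey : ∀ x, |ψ t x - ψ t₀ x| ≤ ε / 2 := by
      intro x
      have e₁ := abs_le.1 (hd₁ x); have e₂ := abs_le.1 (hd₂ x)
      have e₃ := abs_le.1 (hd₃ x); have e₄ := abs_le.1 (hd₄ x)
      have hu : |max (u₁ t x - u₂ t x) 0 - max (u₁ t₀ x - u₂ t₀ x) 0| ≤ ε/4 := by
        refine le_trans (abs_max_sub_max_le_max _ _ _ _) ?_
        simp only [sub_zero, abs_zero, max_le_iff]
        constructor
        · rw [abs_le]; constructor <;> [linarith [e₁.1, e₂.2]; linarith [e₁.2, e₂.1]]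
        · linarith
      have hv : |max (v₁ t x - v₂ t x) 0 - max (v₁ t₀ x - v₂ t₀ x) 0| ≤ ε/4 := by
        refine le_trans (abs_max_sub_max_le_max _ _ _ _) ?_
        simp only [sub_zero, abs_zero, max_le_iff]
        constructor
        · rw [abs_le]; constructor <;> [linarith [e₃.1, e₄.2]; linarith [e₃.2, e₄.1]]
        · linarith
      refine le_trans (abs_max_sub_max_le_max _ _ _ _) ?_
      exact max_le (hu.trans (by linarith)) (hv.trans (by linarith))
    have hfwd : φ t ≤ φ t₀ + ε / 2 := by
      refine ciSup_le fun x => ?_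
      have := abs_le.1 (hkey x)
      linarith [hψle t₀ ht₀ x]
    have hbwd : φ t₀ ≤ φ t + ε / 2 := by
      refine ciSup_le fun x => ?_
      have := abs_le.1 (hkey x)
      linarith [hψle t ht x]
    rw [Real.dist_eq, abs_lt]
    constructor <;> linarith
  have hφint : ∀ t ∈ Set.Icc (0:ℝ) T, IntervalIntegrable φ volume 0 t := by
    intro t ht
    exact (hφcont.mono (Set.Icc_subset_Icc le_rfl ht.2)).intervalIntegrable_of_Icc ht.1
  -- the Gronwall-type inequality
  have key : ∀ t ∈ Set.Icc (0:ℝ) T, φ t ≤ ∫ s in (0:ℝ)..t, C * φ s := by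
    intro t ht
    rcases eq_or_lt_of_le ht.1 with h0 | h0
    · rw [← h0, intervalIntegral.integral_same]
      refine ciSup_le fun x => ?_
      exact max_le (max_le (sub_nonpos.2 (hinitu x)) le_rfl)
        (max_le (sub_nonpos.2 (hinitv x)) le_rfl)
    · have htIoc : t ∈ Set.Ioc (0:ℝ) T := ⟨h0, ht.2⟩
      have hCφint : IntervalIntegrable (fun s => C * φ s) volume 0 t :=
        (hφint t ht).const_mul C
      have hae_ne : ∀ᵐ s ∂(volume.restrict (Set.Icc (0:ℝ) t)), s ≠ t := by
        refine Filter.Eventually.filter_mono (MeasureTheory.ae_mono Measure.restrict_le_self) ?_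
        rw [MeasureTheory.ae_iff]
        have : {s : ℝ | ¬ s ≠ t} = {t} := by ext s; simp
        rw [this]
        exact measure_singleton t
      -- bound for the u-difference
      have hu : ∀ x, u₁ t x - u₂ t x ≤ ∫ s in (0:ℝ)..t, C * φ s := by
        intro x
        obtain ⟨hS1, hS2, _, _⟩ := hsum0 t htIoc x
        obtain ⟨hI1, hI2, _, _⟩ := hint t htIoc x
        have h1 := hu₁ t htIoc x
        have h2 := hu₂ t htIoc x
        have hA : (∑' y, P t x y * u₁ 0 y * μ y) ≤ ∑' y, P t x y * u₂ 0 y * μ y := by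
          refine Summable.tsum_le_tsum (fun y => ?_) hS1 hS2
          have hPy := hP0 t h0 x y
          have hμy := (hμ y).le
          exact mul_le_mul_of_nonneg_right (mul_le_mul_of_nonneg_left (hinitu y) hPy) hμy
        have hB : (∫ s in (0:ℝ)..t, ∑' y, P (t - s) x y * g (v₁ s y) * μ y) -
            (∫ s in (0:ℝ)..t, ∑' y, P (t - s) x y * g (v₂ s y) * μ y) ≤
            ∫ s in (0:ℝ)..t, C * φ s := by
          rw [← intervalIntegral.integral_sub hI1 hI2]
          refine intervalIntegral.integral_mono_ae_restrict h0.le (hI1.sub hI2) hCφint ?_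
          filter_upwards [MeasureTheory.ae_restrict_mem measurableSet_Icc, hae_ne] with s hs hsne
          have hsI : s ∈ Set.Ico (0:ℝ) t := ⟨hs.1, lt_of_le_of_ne hs.2 hsne⟩
          have hts : 0 < t - s := sub_pos.2 hsI.2
          have hsIcc : s ∈ Set.Icc (0:ℝ) T := ⟨hsI.1, hsI.2.le.trans ht.2⟩
          obtain ⟨hg1, hg2, _, _⟩ := hsum1 t htIoc x s hsI
          have hφs : 0 ≤ φ s := hφnn s hsIcc
          have hstep : (∑' y, P (t - s) x y * g (v₁ s y) * μ y) -
              (∑' y, P (t - s) x y * g (v₂ s y) * μ y) ≤ C * φ s := by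
            rw [← Summable.tsum_sub hg1 hg2]
            have hterm : ∀ y, P (t - s) x y * g (v₁ s y) * μ y -
                P (t - s) x y * g (v₂ s y) * μ y ≤
                ((L : ℝ) * φ s) * (P (t - s) x y * μ y) := by
              intro y
              have hPy := hP0 _ hts x y
              have hμy := (hμ y).le
              have hgd : g (v₁ s y) - g (v₂ s y) ≤ (L : ℝ) * φ s := by
                rcases le_or_gt (v₁ s y) (v₂ s y) with h | h
                · exact le_trans (sub_nonpos.2 (hgmono h)) (mul_nonneg L.2 hφs)
                · have hd : |g (v₁ s y) - g (v₂ s y)| ≤ (L : ℝ) * |v₁ s y - v₂ s y| := by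
                    simpa [Real.dist_eq] using hgLip.dist_le_mul (v₁ s y) (v₂ s y)
                  have hvψ : v₁ s y - v₂ s y ≤ φ s :=
                    le_trans (le_trans (le_max_left _ _) (le_max_right _ _)) (hψle s hsIcc y)
                  calc g (v₁ s y) - g (v₂ s y) ≤ |g (v₁ s y) - g (v₂ s y)| := le_abs_self _
                    _ ≤ (L : ℝ) * |v₁ s y - v₂ s y| := hd
                    _ = (L : ℝ) * (v₁ s y - v₂ s y) := by rw [abs_of_pos (sub_pos.2 h)]
                    _ ≤ (L : ℝ) * φ s := mul_le_mul_of_nonneg_left hvψ L.2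
              have heq : P (t - s) x y * g (v₁ s y) * μ y -
                  P (t - s) x y * g (v₂ s y) * μ y =
                  (P (t - s) x y * μ y) * (g (v₁ s y) - g (v₂ s y)) := by ring
              rw [heq, mul_comm ((L : ℝ) * φ s) (P (t - s) x y * μ y)]
              exact mul_le_mul_of_nonneg_left hgd (mul_nonneg hPy hμy)
            calc (∑' y, (P (t - s) x y * g (v₁ s y) * μ y -
                    P (t - s) x y * g (v₂ s y) * μ y))
                ≤ ∑' y, ((L : ℝ) * φ s) * (P (t - s) x y * μ y) :=
                  Summable.tsum_le_tsum hterm (hg1.sub hg2) ((hPsum _ hts x).mul_left _)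
              _ = ((L : ℝ) * φ s) * ∑' y, P (t - s) x y * μ y := tsum_mul_left
              _ ≤ ((L : ℝ) * φ s) * 1 :=
                  mul_le_mul_of_nonneg_left (hPsub _ hts x) (mul_nonneg L.2 hφs)
              _ = (L : ℝ) * φ s := mul_one _
              _ ≤ C * φ s := mul_le_mul_of_nonneg_right hLC hφs
          exact hstep
        linarith
      -- bound for the v-difference
      have hv : ∀ x, v₁ t x - v₂ t x ≤ ∫ s in (0:ℝ)..t, C * φ s := by
        intro x
        obtain ⟨_, _, hS3, hS4⟩ := hsum0 t htIoc x
        obtain ⟨_, _, hI3, hI4⟩ := hint t htIoc x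
        have h1 := hv₁ t htIoc x
        have h2 := hv₂ t htIoc x
        have hA : (∑' y, P t x y * v₁ 0 y * μ y) ≤ ∑' y, P t x y * v₂ 0 y * μ y := by
          refine Summable.tsum_le_tsum (fun y => ?_) hS3 hS4
          have hPy := hP0 t h0 x y
          have hμy := (hμ y).le
          exact mul_le_mul_of_nonneg_right (mul_le_mul_of_nonneg_left (hinitv y) hPy) hμy
        have hB : (∫ s in (0:ℝ)..t, ∑' y, P (t - s) x y * u₁ s y ^ q * μ y) -
            (∫ s in (0:ℝ)..t, ∑' y, P (t - s) x y * u₂ s y ^ q * μ y) ≤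
            ∫ s in (0:ℝ)..t, C * φ s := by
          rw [← intervalIntegral.integral_sub hI3 hI4]
          refine intervalIntegral.integral_mono_ae_restrict h0.le (hI3.sub hI4) hCφint ?_
          filter_upwards [MeasureTheory.ae_restrict_mem measurableSet_Icc, hae_ne] with s hs hsne
          have hsI : s ∈ Set.Ico (0:ℝ) t := ⟨hs.1, lt_of_le_of_ne hs.2 hsne⟩
          have hts : 0 < t - s := sub_pos.2 hsI.2
          have hsIcc : s ∈ Set.Icc (0:ℝ) T := ⟨hsI.1, hsI.2.le.trans ht.2⟩
          obtain ⟨_, _, hg3, hg4⟩ := hsum1 t htIoc x s hsI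
          have hφs : 0 ≤ φ s := hφnn s hsIcc
          have hstep : (∑' y, P (t - s) x y * u₁ s y ^ q * μ y) -
              (∑' y, P (t - s) x y * u₂ s y ^ q * μ y) ≤ C * φ s := by
            rw [← Summable.tsum_sub hg3 hg4]
            have hterm : ∀ y, P (t - s) x y * u₁ s y ^ q * μ y -
                P (t - s) x y * u₂ s y ^ q * μ y ≤
                (K * φ s) * (P (t - s) x y * μ y) := by
              intro y
              have hPy := hP0 _ hts x y
              have hμy := (hμ y).le
              have hud : u₁ s y ^ q - u₂ s y ^ q ≤ K * φ s := by
                have h1' := hpow (u₁ s y) (u₂ s y) (hu₁nn s hsIcc y)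
                  (le_of_abs_le (hbd u₁ (by simp) s hsIcc y)) (hu₂nn s hsIcc y)
                  (le_of_abs_le (hbd u₂ (by simp) s hsIcc y))
                have h2' : max (u₁ s y - u₂ s y) 0 ≤ φ s :=
                  le_trans (le_max_left _ _) (hψle s hsIcc y)
                exact h1'.trans (mul_le_mul_of_nonneg_left h2' hK)
              have heq : P (t - s) x y * u₁ s y ^ q * μ y -
                  P (t - s) x y * u₂ s y ^ q * μ y =
                  (P (t - s) x y * μ y) * (u₁ s y ^ q - u₂ s y ^ q) := by ring
              rw [heq, mul_comm (K * φ s) (P (t - s) x y * μ y)]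
              exact mul_le_mul_of_nonneg_left hud (mul_nonneg hPy hμy)
            calc (∑' y, (P (t - s) x y * u₁ s y ^ q * μ y -
                    P (t - s) x y * u₂ s y ^ q * μ y))
                ≤ ∑' y, (K * φ s) * (P (t - s) x y * μ y) :=
                  Summable.tsum_le_tsum hterm (hg3.sub hg4) ((hPsum _ hts x).mul_left _)
              _ = (K * φ s) * ∑' y, P (t - s) x y * μ y := tsum_mul_left
              _ ≤ (K * φ s) * 1 :=
                  mul_le_mul_of_nonneg_left (hPsub _ hts x) (mul_nonneg hK hφs)
              _ = K * φ s := mul_one _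
              _ ≤ C * φ s := mul_le_mul_of_nonneg_right hKC hφs
          exact hstep
        linarith
      have hRnn : 0 ≤ ∫ s in (0:ℝ)..t, C * φ s :=
        intervalIntegral.integral_nonneg h0.le
          (fun s hs => mul_nonneg hCnn (hφnn s ⟨hs.1, hs.2.trans ht.2⟩))
      exact ciSup_le fun x => max_le (max_le (hu x) hRnn) (max_le (hv x) hRnn)
  -- iteration
  have iter : ∀ n : ℕ, ∀ t ∈ Set.Icc (0:ℝ) T, φ t ≤ 2 * M * (C ^ n * t ^ n / (Nat.factorial n)) := by
    intro n
    induction n with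
    | zero => intro t ht; simpa using hφle t ht
    | succ n ih =>
      intro t ht
      refine (key t ht).trans ?_
      have hmono : (∫ s in (0:ℝ)..t, C * φ s) ≤
          ∫ s in (0:ℝ)..t, (C * (2 * M * (C ^ n / (Nat.factorial n)))) * s ^ n := by
        refine intervalIntegral.integral_mono_on ht.1 ((hφint t ht).const_mul C)
          ((continuous_const.mul (continuous_pow n)).intervalIntegrable 0 t) (fun s hs => ?_)
        have := ih s ⟨hs.1, hs.2.trans ht.2⟩
        have h' : C * φ s ≤ C * (2 * M * (C ^ n * s ^ n / (Nat.factorial n))) :=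
          mul_le_mul_of_nonneg_left this hCnn
        calc C * φ s ≤ C * (2 * M * (C ^ n * s ^ n / (Nat.factorial n))) := h'
          _ = (C * (2 * M * (C ^ n / (Nat.factorial n)))) * s ^ n := by ring
      refine hmono.trans (le_of_eq ?_)
      rw [intervalIntegral.integral_const_mul, integral_pow]
      have h1 : ((Nat.factorial n) : ℝ) ≠ 0 := Nat.cast_ne_zero.2 n.factorial_ne_zero
      have h2 : (n : ℝ) + 1 ≠ 0 := by positivity
      rw [Nat.factorial_succ]
      push_cast
      field_simp
      ring
  -- conclude φ ≤ 0
  have hφ0 : ∀ t ∈ Set.Icc (0:ℝ) T, φ t ≤ 0 := by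
    intro t ht
    have hbound : ∀ n : ℕ, φ t ≤ 2 * M * ((C * T) ^ n / (Nat.factorial n)) := by
      intro n
      refine (iter n t ht).trans ?_
      have hpow' : C ^ n * t ^ n ≤ (C * T) ^ n := by
        rw [mul_pow]
        exact mul_le_mul_of_nonneg_left (pow_le_pow_left₀ ht.1 ht.2 n) (pow_nonneg hCnn n)
      have hfac : (0:ℝ) < (Nat.factorial n) := by exact_mod_cast n.factorial_pos
      have : C ^ n * t ^ n / (Nat.factorial n) ≤ (C * T) ^ n / (Nat.factorial n) :=
        (div_le_div_iff_of_pos_right hfac).2 hpow'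
      exact mul_le_mul_of_nonneg_left this (by linarith)
    have hlim : Filter.Tendsto (fun n : ℕ => 2 * M * ((C * T) ^ n / (Nat.factorial n)))
        Filter.atTop (nhds 0) := by
      have := (FloorSemiring.tendsto_pow_div_factorial_atTop (K := ℝ) (C * T)).const_mul (2 * M)
      simpa using this
    exact ge_of_tendsto' hlim hbound
  -- finish
  intro t ht x
  have h := (hψle t ht x).trans (hφ0 t ht)
  have hdu : u₁ t x - u₂ t x ≤ 0 :=
    le_trans (le_trans (le_max_left _ _) (le_max_left _ _)) h
  have hdv : v₁ t x - v₂ t x ≤ 0 :=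
    le_trans (le_trans (le_max_left _ _) (le_max_right _ _)) h
  exact ⟨by linarith, by linarith⟩
end

section
/- Let V, ω, μ, D, N(x) and the graph Laplacian Δ be as follows: ω : V → V → ℝ nonnegative, μ : V → ℝ positive, every neighbor set N(x) = { y : ω x y ≠ 0 } finite, ∑_{y ∈ N(x)} ω x y ≤ D · μ(x) for all x, and (Δf)(x) = (1/μ(x)) ∑_{y ∈ N(x)} ω x y (f(y) − f(x)). Let u₀ : V → ℝ with |u₀(x)| ≤ B for all x (B ≥ 0). Then for all real t ≥ 0 and δ ≥ 0 and every x ∈ V, the series ∑_{k=0}^∞ ((t+δ)^k − t^k)/k! · (Δ^k u₀)(x) converges absolutely and its sum has absolute value at most B · ( e^{2D(t+δ)} − e^{2Dt} ). -/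
/-- The graph Laplacian `(Δf)(x) = (1/μ(x)) ∑_{y ∈ N(x)} ω(x,y)(f(y) − f(x))`
on a locally finite weighted graph. -/
noncomputable def graphLaplacian {V : Type*} (ω : V → V → ℝ) (μ : V → ℝ)
    (hfin : ∀ x : V, {y : V | ω x y ≠ 0}.Finite) (f : V → ℝ) (x : V) : ℝ :=
  (1 / μ x) * ∑ y ∈ (hfin x).toFinset, ω x y * (f y - f x)

lemma graphLaplacian_bound {V : Type*} (ω : V → V → ℝ) (μ : V → ℝ)
    (hω : ∀ x y, 0 ≤ ω x y) (hμ : ∀ x, 0 < μ x)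
    (hfin : ∀ x : V, {y : V | ω x y ≠ 0}.Finite)
    (D : ℝ)
    (hDμ : ∀ x : V, (∑ y ∈ (hfin x).toFinset, ω x y) ≤ D * μ x)
    (f : V → ℝ) (C : ℝ) (hC : 0 ≤ C) (hf : ∀ y, |f y| ≤ C) (x : V) :
    |graphLaplacian ω μ hfin f x| ≤ 2 * D * C := by
  have hμx := hμ x
  have h1 : |∑ y ∈ (hfin x).toFinset, ω x y * (f y - f x)| ≤
      ∑ y ∈ (hfin x).toFinset, ω x y * (2 * C) := by
    refine (Finset.abs_sum_le_sum_abs _ _).trans (Finset.sum_le_sum fun y _ => ?_)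
    rw [abs_mul, abs_of_nonneg (hω x y)]
    refine mul_le_mul_of_nonneg_left ?_ (hω x y)
    calc |f y - f x| ≤ |f y| + |f x| := abs_sub _ _
      _ ≤ C + C := add_le_add (hf y) (hf x)
      _ = 2 * C := by ring
  have h2 : ∑ y ∈ (hfin x).toFinset, ω x y * (2 * C) ≤ D * μ x * (2 * C) := by
    rw [← Finset.sum_mul]
    exact mul_le_mul_of_nonneg_right (hDμ x) (by positivity)
  rw [graphLaplacian, abs_mul, abs_of_nonneg (by positivity : (0:ℝ) ≤ 1 / μ x)]
  calc 1 / μ x * |∑ y ∈ (hfin x).toFinset, ω x y * (f y - f x)|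
      ≤ 1 / μ x * (D * μ x * (2 * C)) :=
        mul_le_mul_of_nonneg_left (h1.trans h2) (by positivity)
    _ = 2 * D * C := by field_simp

lemma graphLaplacian_iter_bound {V : Type*} (ω : V → V → ℝ) (μ : V → ℝ)
    (hω : ∀ x y, 0 ≤ ω x y) (hμ : ∀ x, 0 < μ x)
    (hfin : ∀ x : V, {y : V | ω x y ≠ 0}.Finite)
    (D : ℝ) (hD : 0 ≤ D)
    (hDμ : ∀ x : V, (∑ y ∈ (hfin x).toFinset, ω x y) ≤ D * μ x)
    (u₀ : V → ℝ) (B : ℝ) (hB : 0 ≤ B) (hu₀ : ∀ x, |u₀ x| ≤ B)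
    (k : ℕ) (x : V) :
    |(graphLaplacian ω μ hfin)^[k] u₀ x| ≤ (2 * D) ^ k * B := by
  induction k generalizing x with
  | zero => simpa using hu₀ x
  | succ k ih =>
    rw [Function.iterate_succ_apply']
    have := graphLaplacian_bound ω μ hω hμ hfin D hDμ
      ((graphLaplacian ω μ hfin)^[k] u₀) ((2 * D) ^ k * B) (by positivity) ih x
    calc |graphLaplacian ω μ hfin ((graphLaplacian ω μ hfin)^[k] u₀) x|
        ≤ 2 * D * ((2 * D) ^ k * B) := this
      _ = (2 * D) ^ (k + 1) * B := by ring

/-- Inequality (3.21): the series `∑ ((t+δ)^k − t^k)/k! · Δ^k u₀(x)` converges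
absolutely and is bounded by `B (e^{2D(t+δ)} − e^{2Dt})`. -/
theorem heat_series_increment_bound {V : Type*} (ω : V → V → ℝ) (μ : V → ℝ)
    (hω : ∀ x y, 0 ≤ ω x y) (hμ : ∀ x, 0 < μ x)
    (hfin : ∀ x : V, {y : V | ω x y ≠ 0}.Finite)
    (D : ℝ) (hD : 0 ≤ D)
    (hDμ : ∀ x : V, (∑ y ∈ (hfin x).toFinset, ω x y) ≤ D * μ x)
    (u₀ : V → ℝ) (B : ℝ) (hB : 0 ≤ B) (hu₀ : ∀ x, |u₀ x| ≤ B)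
    (t δ : ℝ) (ht : 0 ≤ t) (hδ : 0 ≤ δ) (x : V) :
    Summable (fun k : ℕ =>
      |((t + δ) ^ k - t ^ k) / (k.factorial : ℝ) *
        ((graphLaplacian ω μ hfin)^[k] u₀ x)|) ∧
    |∑' k : ℕ, ((t + δ) ^ k - t ^ k) / (k.factorial : ℝ) *
        ((graphLaplacian ω μ hfin)^[k] u₀ x)| ≤
      B * (Real.exp (2 * D * (t + δ)) - Real.exp (2 * D * t)) := by
  set Δ := graphLaplacian ω μ hfin
  set g : ℕ → ℝ := fun k =>
    B * ((2 * D * (t + δ)) ^ k / k.factorial - (2 * D * t) ^ k / k.factorial)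
  have hg : Summable g := by
    apply Summable.mul_left
    exact (Real.summable_pow_div_factorial _).sub (Real.summable_pow_div_factorial _)
  have hbound : ∀ k : ℕ,
      |((t + δ) ^ k - t ^ k) / (k.factorial : ℝ) * (Δ^[k] u₀ x)| ≤ g k := by
    intro k
    have htk : t ^ k ≤ (t + δ) ^ k := pow_le_pow_left₀ ht (by linarith) k
    have hfac : (0:ℝ) < k.factorial := by positivity
    rw [abs_mul, abs_div, abs_of_nonneg (by linarith : (0:ℝ) ≤ (t + δ) ^ k - t ^ k),
      abs_of_pos hfac]
    calc ((t + δ) ^ k - t ^ k) / k.factorial * |Δ^[k] u₀ x|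
        ≤ ((t + δ) ^ k - t ^ k) / k.factorial * ((2 * D) ^ k * B) := by
          exact mul_le_mul_of_nonneg_left
            (graphLaplacian_iter_bound ω μ hω hμ hfin D hD hDμ u₀ B hB hu₀ k x)
            (div_nonneg (by linarith) hfac.le)
      _ = g k := by simp only [g, mul_pow]; field_simp
  have hsum : Summable (fun k : ℕ =>
      |((t + δ) ^ k - t ^ k) / (k.factorial : ℝ) * (Δ^[k] u₀ x)|) :=
    Summable.of_nonneg_of_le (fun k => abs_nonneg _) hbound hg
  refine ⟨hsum, ?_⟩
  have htsum_g : ∑' k, g k =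
      B * (Real.exp (2 * D * (t + δ)) - Real.exp (2 * D * t)) := by
    rw [tsum_mul_left, Summable.tsum_sub (Real.summable_pow_div_factorial _)
      (Real.summable_pow_div_factorial _)]
    congr 1
    rw [Real.exp_eq_exp_ℝ, NormedSpace.exp_eq_tsum_div]
  calc |∑' k : ℕ, ((t + δ) ^ k - t ^ k) / (k.factorial : ℝ) * (Δ^[k] u₀ x)|
      ≤ ∑' k : ℕ, |((t + δ) ^ k - t ^ k) / (k.factorial : ℝ) * (Δ^[k] u₀ x)| := by
        have h := norm_tsum_le_tsum_norm
          (f := fun k : ℕ => ((t + δ) ^ k - t ^ k) / (k.factorial : ℝ) * (Δ^[k] u₀ x))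
          (by simpa only [Real.norm_eq_abs] using hsum)
        simpa only [Real.norm_eq_abs] using h
    _ ≤ ∑' k, g k := Summable.tsum_le_tsum hbound hsum hg
    _ = _ := htsum_g
end
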